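/- Every complex solution z of the equation 1 + h z = (1/2) e^{-z h}, with h > 0, satisfies Re(z) < 0. -/

import Mathlib

/-- Every complex solution of 1 + hz = (1/2) e^{-zh} with h > 0 has negative real part. -/
theorem solutions_in_left_half_plane
    (h : ℝ) (hh : 0 < h) (z : ℂ)
    (heq : 1 + (h : ℂ) * z = (1 / 2) * Complex.exp (-z * h)) :
    z.re < 0 := by
  by_contra hc
  push_neg at hc
  have h1 : (1:ℝ) ≤ ‖(1 + (h:ℂ) * z)‖ := by
    calc (1:ℝ) ≤ (1 + (h:ℂ) * z).re := by
          simp [Complex.add_re, Complex.mul_re]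
          nlinarith
      _ ≤ ‖(1 + (h:ℂ) * z)‖ := Complex.re_le_norm _
  have h2 : ‖((1/2 : ℂ) * Complex.exp (-z * h))‖ ≤ 1/2 := by
    rw [norm_mul, Complex.norm_exp]
    have hre : (-z * (h:ℂ)).re = -(z.re * h) := by simp [Complex.mul_re]
    rw [hre]
    have : Real.exp (-(z.re * h)) ≤ 1 := by
      rw [Real.exp_le_one_iff]
      nlinarith
    simp only [norm_div, norm_one, Complex.norm_ofNat]
    nlinarith [Real.exp_pos (-(z.re * h))]
  rw [heq] at h1
  linarith
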